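/- Let A = (ℤ/dℤ) × (ℤ/nℤ) with m | d | n. The number of ordered pairs (P, Q) in A × A such that P has order m, Q has order n, and the 'determinant pairing' of P with (n/m)Q is a fixed primitive m-th root of unity (under the standard alternating pairing on A[m] ≅ (ℤ/mℤ)²), equals m·φ(n)·ψ(n)/ψ(n/d). -/

import Mathlib

set_option linter.unusedSectionVars false
set_option maxHeartbeats 1600000

/-- `ψ(n) = n ∏_{p ∣ n} (1 + 1/p)` as a rational number. -/
def psiQ (n : ℕ) : ℚ := n * ∏ p ∈ n.primeFactors, (1 + 1 / (p : ℚ))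

/-- The canonical isomorphism `(d/m)·(ℤ/dℤ) ≅ ℤ/mℤ` (for `m ∣ d`), as the map sending
an element `x` of `ℤ/dℤ` killed by `m` to `x.val / (d/m)` in `ℤ/mℤ`. -/
def divDown (d m : ℕ) (x : ZMod d) : ZMod m := ((x.val / (d / m) : ℕ) : ZMod m)

/-- The standard alternating (determinant) pairing on the `m`-torsion of
`(ℤ/dℤ) × (ℤ/nℤ)` (for `m ∣ d ∣ n`), with values in `ℤ/mℤ`. -/
def detPairing (d n m : ℕ) (P Q : ZMod d × ZMod n) : ZMod m :=
  divDown d m P.1 * divDown n m Q.2 - divDown n m P.2 * divDown d m Q.1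

section up
variable {m d : ℕ}

/-- the "multiplication by d/m" map `ZMod m →+ ZMod d` -/
def divUpHom (h : m ∣ d) : ZMod m →+ ZMod d :=
  ZMod.lift m ⟨zmultiplesHom _ (((d / m : ℕ) : ZMod d)), by
    have : ((m : ℤ) • ((d / m : ℕ) : ZMod d)) = ((m * (d / m) : ℕ) : ZMod d) := by
      rw [zsmul_eq_mul]; push_cast; ring
    simp only [zmultiplesHom_apply, this, Nat.mul_div_cancel' h, ZMod.natCast_self]⟩

lemma divUpHom_apply [NeZero m] (h : m ∣ d) (x : ZMod m) :
    divUpHom h x = ((x.val * (d / m) : ℕ) : ZMod d) := by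
  have hx : ((x.val : ℤ) : ZMod m) = x := by
    push_cast; simp [ZMod.natCast_val, ZMod.cast_id]
  calc divUpHom h x = divUpHom h (((x.val : ℤ) : ZMod m)) := by rw [hx]
    _ = (x.val : ℤ) • (((d / m : ℕ) : ZMod d)) := ZMod.lift_coe m _ _
    _ = ((x.val * (d / m) : ℕ) : ZMod d) := by rw [zsmul_eq_mul]; push_cast; ring

variable (hm : 0 < m) (hd : 0 < d) (hmd : m ∣ d)
include hm hd hmd

lemma divDown_divUpHom (x : ZMod m) : divDown d m (divUpHom hmd x) = x := by
  haveI : NeZero m := ⟨hm.ne'⟩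
  haveI : NeZero d := ⟨hd.ne'⟩
  have hq : 0 < d / m := Nat.div_pos (Nat.le_of_dvd hd hmd) hm
  have hlt : x.val * (d / m) < d := by
    calc x.val * (d / m) < m * (d / m) := (Nat.mul_lt_mul_right hq).mpr (ZMod.val_lt x)
      _ = d := Nat.mul_div_cancel' hmd
  rw [divUpHom_apply, divDown, ZMod.val_natCast, Nat.mod_eq_of_lt hlt,
    Nat.mul_div_cancel _ hq]
  simp [ZMod.natCast_val, ZMod.cast_id]

lemma nsmul_divUpHom (x : ZMod m) : m • divUpHom hmd x = 0 := by
  rw [← AddMonoidHom.map_nsmul]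
  have : m • x = 0 := by
    rw [nsmul_eq_mul, ZMod.natCast_self, zero_mul]
  rw [this, map_zero]

lemma divUpHom_divDown (y : ZMod d) (hy : m • y = 0) :
    divUpHom hmd (divDown d m y) = y := by
  haveI : NeZero m := ⟨hm.ne'⟩
  haveI : NeZero d := ⟨hd.ne'⟩
  have hq : 0 < d / m := Nat.div_pos (Nat.le_of_dvd hd hmd) hm
  have hdvd : d ∣ m * y.val := by
    have : ((m * y.val : ℕ) : ZMod d) = 0 := by
      push_cast
      rw [ZMod.natCast_val, ZMod.cast_id]
      rw [nsmul_eq_mul] at hy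
      exact_mod_cast hy
    exact (ZMod.natCast_eq_zero_iff _ _).mp this
  have hdvd2 : (d / m) ∣ y.val := by
    rcases hdvd with ⟨t, ht⟩
    refine ⟨t, ?_⟩
    have hd' : d = m * (d / m) := (Nat.mul_div_cancel' hmd).symm
    have h2 : m * y.val = m * ((d / m) * t) := by
      rw [ht]; conv_lhs => rw [hd']
      ring
    exact Nat.eq_of_mul_eq_mul_left hm h2
  rw [divDown, divUpHom_apply]
  have hval : ((y.val / (d / m) : ℕ) : ZMod m).val = y.val / (d / m) := by
    rw [ZMod.val_natCast, Nat.mod_eq_of_lt]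
    have : y.val / (d / m) < d / (d / m) := by
      apply Nat.div_lt_div_of_lt_of_dvd (Nat.div_dvd_of_dvd hmd) (ZMod.val_lt y)
    rwa [Nat.div_div_self hmd hd.ne'] at this
  rw [hval, Nat.div_mul_cancel hdvd2]
  simp [ZMod.natCast_val, ZMod.cast_id]

lemma divUpHom_injective : Function.Injective (divUpHom hmd : ZMod m →+ ZMod d) := by
  intro a b hab
  have := congrArg (divDown d m) hab
  rwa [divDown_divUpHom hm hd hmd, divDown_divUpHom hm hd hmd] at this

end up

/-- nsmul on ZMod is zero iff the modulus divides k * val -/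
lemma nsmul_zmod_eq_zero_iff {d : ℕ} [NeZero d] (k : ℕ) (x : ZMod d) :
    k • x = 0 ↔ d ∣ k * x.val := by
  rw [nsmul_eq_mul, ← ZMod.natCast_eq_zero_iff]
  push_cast
  rw [ZMod.natCast_val, ZMod.cast_id]

/-- the k-torsion of ZMod d has gcd d k elements -/
lemma card_torsion (d k : ℕ) (hd : 0 < d) :
    Nat.card {x : ZMod d // k • x = 0} = Nat.gcd d k := by
  haveI : NeZero d := ⟨hd.ne'⟩
  set g := Nat.gcd d k with hg
  have hgd : g ∣ d := Nat.gcd_dvd_left d k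
  have hgpos : 0 < g := Nat.gcd_pos_of_pos_left k hd
  haveI : NeZero g := ⟨hgpos.ne'⟩
  have key : ∀ x : ZMod d, k • x = 0 ↔ g • x = 0 := by
    intro x
    rw [nsmul_zmod_eq_zero_iff, nsmul_zmod_eq_zero_iff]
    constructor
    · intro h
      have h2 : d ∣ Nat.gcd (d * x.val) (k * x.val) := Nat.dvd_gcd (dvd_mul_right d x.val) h
      rwa [Nat.gcd_mul_right] at h2
    · intro h
      exact h.trans (Nat.mul_dvd_mul_right (Nat.gcd_dvd_right d k) x.val)
  have e : ZMod g ≃ {x : ZMod d // k • x = 0} := by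
    refine Equiv.ofBijective (fun z => ⟨divUpHom hgd z, (key _).mpr (nsmul_divUpHom hgpos hd hgd z)⟩) ⟨?_, ?_⟩
    · intro a b hab
      exact divUpHom_injective hgpos hd hgd (congrArg Subtype.val hab)
    · rintro ⟨y, hy⟩
      exact ⟨divDown d g y, Subtype.ext (divUpHom_divDown hgpos hd hgd y ((key y).mp hy))⟩
  rw [← Nat.card_congr e, Nat.card_eq_fintype_card, ZMod.card]

lemma psiQ_pos {n : ℕ} (hn : 0 < n) : 0 < psiQ n := by
  unfold psiQ
  apply mul_pos (by exact_mod_cast hn)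
  apply Finset.prod_pos
  intro p hp
  have := (Nat.prime_of_mem_primeFactors hp).pos
  positivity

lemma psiQ_one : psiQ 1 = 1 := by simp [psiQ]

lemma psiQ_prime_pow {p k : ℕ} (hp : p.Prime) (hk : k ≠ 0) :
    psiQ (p ^ k) = (p : ℚ) ^ k * (1 + 1 / (p : ℚ)) := by
  rw [psiQ, Nat.primeFactors_prime_pow hk hp]
  push_cast
  simp

lemma psiQ_mul {a b : ℕ} (ha : a ≠ 0) (hb : b ≠ 0) (hab : a.Coprime b) :
    psiQ (a * b) = psiQ a * psiQ b := by
  rw [psiQ, psiQ, psiQ, Nat.primeFactors_mul ha hb,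
    Finset.prod_union hab.disjoint_primeFactors]
  push_cast
  ring

lemma nsmul_zmod_eq_zero_of_dvd {d k : ℕ} [NeZero d] (h : d ∣ k) (x : ZMod d) :
    k • x = 0 := by
  rcases h with ⟨t, rfl⟩
  rw [nsmul_eq_mul]
  push_cast
  rw [ZMod.natCast_self, zero_mul, zero_mul]

lemma prod_nsmul_eq_zero_iff {A B : Type*} [AddMonoid A] [AddMonoid B] (k : ℕ) (z : A × B) :
    k • z = 0 ↔ k • z.1 = 0 ∧ k • z.2 = 0 := by
  rw [Prod.ext_iff]
  constructor <;> exact fun h => ⟨h.1, h.2⟩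

lemma countPP (p e f : ℕ) (hp : p.Prime) (he : 1 ≤ e) (hf : f ≤ e) :
    (Nat.card {Q : ZMod (p^f) × ZMod (p^e) // addOrderOf Q = p^e} : ℚ) =
      (p^e).totient * psiQ (p^e) / psiQ (p^e / p^f) := by
  classical
  have hp1 : 1 < p := hp.one_lt
  have hppos : 0 < p := hp.pos
  haveI : NeZero (p^f) := ⟨(pow_pos hppos f).ne'⟩
  haveI : NeZero (p^e) := ⟨(pow_pos hppos e).ne'⟩
  -- the complementary description of the condition
  have hiff : ∀ Q : ZMod (p^f) × ZMod (p^e), addOrderOf Q = p^e ↔ ¬ (p^(e-1) • Q = 0) := by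
    intro Q
    have hQtor : addOrderOf Q ∣ p^e := by
      apply addOrderOf_dvd_iff_nsmul_eq_zero.mpr
      rw [prod_nsmul_eq_zero_iff]
      exact ⟨nsmul_zmod_eq_zero_of_dvd (pow_dvd_pow p hf) Q.1,
        nsmul_zmod_eq_zero_of_dvd dvd_rfl Q.2⟩
    constructor
    · intro h hc
      have := addOrderOf_dvd_iff_nsmul_eq_zero.mpr hc
      rw [h] at this
      exact absurd (Nat.pow_dvd_pow_iff_le_right hp1 |>.mp this) (by omega)
    · intro h
      obtain ⟨j, hj, hord⟩ := (Nat.dvd_prime_pow hp).mp hQtor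
      rcases Nat.lt_or_ge j e with hje | hje
      · exfalso
        apply h
        apply addOrderOf_dvd_iff_nsmul_eq_zero.mp
        rw [hord]
        exact pow_dvd_pow p (by omega)
      · rw [hord, Nat.le_antisymm hj hje]
  -- cardinality via complement
  have hcompl : Nat.card {Q : ZMod (p^f) × ZMod (p^e) // addOrderOf Q = p^e}
      = p^f * p^e - Nat.gcd (p^f) (p^(e-1)) * p^(e-1) := by
    have e0 : {Q : ZMod (p^f) × ZMod (p^e) // addOrderOf Q = p^e}
        ≃ {Q : ZMod (p^f) × ZMod (p^e) // ¬ (p^(e-1) • Q = 0)} :=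
      Equiv.subtypeEquiv (Equiv.refl _) (fun Q => by simpa using hiff Q)
    have e1 : {Q : ZMod (p^f) × ZMod (p^e) // p^(e-1) • Q = 0}
        ≃ {x : ZMod (p^f) // p^(e-1) • x = 0} × {y : ZMod (p^e) // p^(e-1) • y = 0} := by
      refine (Equiv.subtypeEquiv (Equiv.refl _) (fun Q => ?_)).trans
        (Equiv.subtypeProdEquivProd)
      simpa using prod_nsmul_eq_zero_iff (p^(e-1)) Q
    have htor : Nat.card {Q : ZMod (p^f) × ZMod (p^e) // p^(e-1) • Q = 0}
        = Nat.gcd (p^f) (p^(e-1)) * p^(e-1) := by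
      rw [Nat.card_congr e1, Nat.card_prod, card_torsion _ _ (pow_pos hppos f),
        card_torsion _ _ (pow_pos hppos e)]
      congr 1
      exact Nat.gcd_eq_right (pow_dvd_pow p (by omega))
    rw [Nat.card_congr e0, Nat.card_eq_fintype_card, Fintype.card_subtype_compl,
      Fintype.card_prod, ZMod.card, ZMod.card, ← Nat.card_eq_fintype_card, htor]
  rw [hcompl]
  -- now the rational arithmetic
  have htot : ((p^e).totient : ℚ) = (p:ℚ)^e - (p:ℚ)^(e-1) := by
    rw [Nat.totient_prime_pow hp he, Nat.cast_mul, Nat.cast_pow, Nat.cast_sub hp1.le]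
    have h : (p:ℚ)^e = (p:ℚ)^(e-1) * p := by
      rw [← pow_succ]; congr 1; omega
    rw [h]; push_cast; ring
  have hple : Nat.gcd (p^f) (p^(e-1)) * p^(e-1) ≤ p^f * p^e :=
    Nat.mul_le_mul (Nat.le_of_dvd (pow_pos hppos f) (Nat.gcd_dvd_left _ _))
      (Nat.pow_le_pow_right hppos (by omega))
  rcases Nat.lt_or_ge f e with hfe | hfe
  · -- f < e
    have hgcd : Nat.gcd (p^f) (p^(e-1)) = p^f := Nat.gcd_eq_left (pow_dvd_pow p (by omega))
    have hdiv : p^e / p^f = p^(e-f) := Nat.pow_div hf hppos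
    rw [hgcd] at hple
    rw [hgcd, hdiv, psiQ_prime_pow hp (by omega : e ≠ 0), psiQ_prime_pow hp (by omega : e - f ≠ 0),
      Nat.cast_sub hple, htot]
    push_cast
    have h1 : (p:ℚ) ≠ 0 := by positivity
    have h2 : (1 : ℚ) + 1/(p:ℚ) ≠ 0 := by positivity
    field_simp
    have hef : (p:ℚ)^(e-f) * (p:ℚ)^f = (p:ℚ)^e := by
      rw [← pow_add]; congr 1; omega
    linear_combination ((p:ℚ)^e - (p:ℚ)^(e-1)) * hef
  · -- f = e
    have hfe' : f = e := le_antisymm hf hfe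
    subst hfe'
    have hgcd : Nat.gcd (p^f) (p^(f-1)) = p^(f-1) := Nat.gcd_eq_right (pow_dvd_pow p (by omega))
    have hdiv : p^f / p^f = 1 := Nat.div_self (pow_pos hppos f)
    rw [hgcd] at hple
    rw [hgcd, hdiv, psiQ_one, psiQ_prime_pow hp (by omega : f ≠ 0),
      Nat.cast_sub hple, htot]
    push_cast
    have h1 : (p:ℚ) ≠ 0 := by positivity
    field_simp
    have he1 : (p:ℚ)^(f-1) * (p:ℚ) = (p:ℚ)^f := by
      rw [← pow_succ]; congr 1; omega
    nlinarith [he1]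

section fiber
variable {m d n : ℕ} (hm : 0 < m) (hmd : m ∣ d) (hdn : d ∣ n) (hn : 0 < n)
include hm hmd hdn hn

lemma fiber_card (ζ : ZMod m) (hζ : addOrderOf ζ = m) (Q : ZMod d × ZMod n)
    (hQ : addOrderOf Q = n) :
    Nat.card {P : ZMod d × ZMod n // addOrderOf P = m ∧
        detPairing d n m P ((n / m) • Q) = ζ} = m := by
  have hd : 0 < d := Nat.pos_of_dvd_of_pos hdn hn
  have hmn : m ∣ n := hmd.trans hdn
  haveI : NeZero m := ⟨hm.ne'⟩
  haveI : NeZero d := ⟨hd.ne'⟩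
  haveI : NeZero n := ⟨hn.ne'⟩
  set Q' := (n / m) • Q with hQ'def
  -- order of Q' is m
  have hnmpos : 0 < n / m := Nat.div_pos (Nat.le_of_dvd hn hmn) hm
  have hQ' : addOrderOf Q' = m := by
    apply Nat.dvd_antisymm
    · apply addOrderOf_dvd_iff_nsmul_eq_zero.mpr
      rw [hQ'def, smul_smul, Nat.mul_div_cancel' hmn]
      have := addOrderOf_nsmul_eq_zero Q
      rwa [hQ] at this
    · have h0 : (addOrderOf Q' * (n / m)) • Q = 0 := by
        rw [← smul_smul, ← hQ'def]
        exact addOrderOf_nsmul_eq_zero Q'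
      have h1 : n ∣ addOrderOf Q' * (n / m) := by
        have := addOrderOf_dvd_iff_nsmul_eq_zero.mpr h0
        rwa [hQ] at this
      have h2 : m * (n / m) ∣ addOrderOf Q' * (n / m) := by
        rwa [Nat.mul_div_cancel' hmn]
      exact (Nat.mul_dvd_mul_iff_right hnmpos).mp h2
  have hmQ' : m • Q' = 0 := by
    rw [← hQ']; exact addOrderOf_nsmul_eq_zero Q'
  set u := divDown d m Q'.1 with hu
  set v := divDown n m Q'.2 with hv
  -- the linear form
  set g : ZMod m × ZMod m →+ ZMod m := AddMonoidHom.mk' (fun z => z.1 * v - z.2 * u)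
    (by intro a b; simp only [Prod.fst_add, Prod.snd_add]; ring) with hgdef
  have hgapply : ∀ z : ZMod m × ZMod m, g z = z.1 * v - z.2 * u := fun z => rfl
  -- E and its properties
  set E : ZMod m × ZMod m →+ ZMod d × ZMod n :=
    AddMonoidHom.prodMap (divUpHom hmd) (divUpHom hmn) with hEdef
  have hEinj : Function.Injective E := by
    intro a b hab
    have h1 := congrArg Prod.fst hab
    have h2 := congrArg Prod.snd hab
    exact Prod.ext (divUpHom_injective hm hd hmd h1) (divUpHom_injective hm hn hmn h2)
  have hEord : ∀ z, addOrderOf (E z) = addOrderOf z := addOrderOf_injective E hEinj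
  have hE_of_tor : ∀ P : ZMod d × ZMod n, m • P = 0 →
      E (divDown d m P.1, divDown n m P.2) = P := by
    intro P hP
    have h1 : m • P.1 = 0 := congrArg Prod.fst hP
    have h2 : m • P.2 = 0 := congrArg Prod.snd hP
    exact Prod.ext (divUpHom_divDown hm hd hmd _ h1) (divUpHom_divDown hm hn hmn _ h2)
  have hEdown : ∀ z : ZMod m × ZMod m,
      (divDown d m (E z).1, divDown n m (E z).2) = z := by
    intro z
    exact Prod.ext (divDown_divUpHom hm hd hmd z.1) (divDown_divUpHom hm hn hmn z.2)
  -- z0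
  have hz0 : addOrderOf ((u, v) : ZMod m × ZMod m) = m := by
    rw [← hEord (u, v), hE_of_tor Q' hmQ', hQ']
  -- surjectivity of g
  have hgsurj : Function.Surjective g := by
    rw [← AddMonoidHom.range_eq_top]  -- check name
    apply AddSubgroup.eq_top_of_card_eq
    have hu_mem : u ∈ g.range := ⟨(0, -1), by rw [hgapply]; ring⟩
    have hv_mem : v ∈ g.range := ⟨(1, 0), by rw [hgapply]; ring⟩
    have h1 : addOrderOf u ∣ Nat.card g.range := by
      simpa using addOrderOf_dvd_natCard (⟨u, hu_mem⟩ : g.range)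
    have h2 : addOrderOf v ∣ Nat.card g.range := by
      simpa using addOrderOf_dvd_natCard (⟨v, hv_mem⟩ : g.range)
    have hlcm : m ∣ Nat.card g.range := by
      have heq : Nat.lcm (addOrderOf u) (addOrderOf v) = m :=
        (Prod.addOrderOf ((u, v) : ZMod m × ZMod m)).symm.trans hz0
      exact (dvd_of_eq heq.symm).trans (Nat.lcm_dvd h1 h2)
    have hcard : Nat.card g.range ∣ m := by
      have := AddSubgroup.card_addSubgroup_dvd_card g.range
      rwa [Nat.card_zmod] at this
    have : Nat.card g.range = m := Nat.dvd_antisymm hcard hlcm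
    rw [this, Nat.card_zmod]
  -- card of the kernel
  have hker : Nat.card g.ker = m := by
    have htot := AddSubgroup.card_eq_card_quotient_mul_card_addSubgroup g.ker
    have hq : Nat.card ((ZMod m × ZMod m) ⧸ g.ker) = m := by
      rw [Nat.card_congr (QuotientAddGroup.quotientKerEquivOfSurjective g hgsurj).toEquiv,
        Nat.card_zmod]
    rw [hq, Nat.card_prod, Nat.card_zmod] at htot
    exact (Nat.eq_of_mul_eq_mul_left hm htot).symm
  -- fiber over ζ has the same cardinality as the kernel
  obtain ⟨z1, hz1⟩ := hgsurj ζ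
  have e1 : {z : ZMod m × ZMod m // g z = ζ} ≃ g.ker := by
    refine ⟨fun z => ⟨z.1 - z1, ?_⟩, fun w => ⟨w.1 + z1, ?_⟩, ?_, ?_⟩
    · rw [AddMonoidHom.mem_ker, map_sub, z.2, hz1, sub_self]
    · rw [map_add, hz1, AddMonoidHom.mem_ker.mp w.2, zero_add]
    · intro z; ext : 1; simp
    · intro w; ext : 1; simp
  -- every element of ZMod m × ZMod m is m-torsion
  have hmz : ∀ z : ZMod m × ZMod m, m • z = 0 := by
    intro z
    have h1 : ∀ a : ZMod m, m • a = 0 := fun a => by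
      rw [nsmul_eq_mul, ZMod.natCast_self, zero_mul]
    exact Prod.ext (h1 z.1) (h1 z.2)
  -- order is forced by the pairing value
  have hord : ∀ z : ZMod m × ZMod m, g z = ζ → addOrderOf (E z) = m := by
    intro z hz
    rw [hEord]
    have hdvd1 : addOrderOf z ∣ m := addOrderOf_dvd_iff_nsmul_eq_zero.mpr (hmz z)
    have hdvd2 : m ∣ addOrderOf z := by
      have h0 : addOrderOf z • ζ = 0 := by
        rw [← hz, ← map_nsmul, addOrderOf_nsmul_eq_zero, map_zero]
      have h := addOrderOf_dvd_iff_nsmul_eq_zero.mpr h0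
      rwa [hζ] at h
    exact Nat.dvd_antisymm hdvd1 hdvd2
  have hdet : ∀ z : ZMod m × ZMod m, g z = ζ → detPairing d n m (E z) Q' = ζ := by
    intro z hz
    have hc1 : divDown d m (E z).1 = z.1 := congrArg Prod.fst (hEdown z)
    have hc2 : divDown n m (E z).2 = z.2 := congrArg Prod.snd (hEdown z)
    rw [detPairing, hc1, hc2, ← hu, ← hv, ← hgapply, hz]
  have hcardP : Nat.card {P : ZMod d × ZMod n // addOrderOf P = m ∧
      detPairing d n m P ((n / m) • Q) = ζ} = Nat.card {z : ZMod m × ZMod m // g z = ζ} := by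
    apply Nat.card_congr
    apply Equiv.symm
    refine Equiv.ofBijective (fun z => ⟨E z.1, hord z.1 z.2, hdet z.1 z.2⟩) ⟨?_, ?_⟩
    · intro a b hab
      have h := congrArg Subtype.val hab
      exact Subtype.ext (hEinj h)
    · rintro ⟨P, h1, h2⟩
      have hmP : m • P = 0 := by rw [← h1]; exact addOrderOf_nsmul_eq_zero P
      have hz : g (divDown d m P.1, divDown n m P.2) = ζ := by
        rw [hgapply]; exact h2
      exact ⟨⟨(divDown d m P.1, divDown n m P.2), hz⟩, Subtype.ext (hE_of_tor P hmP)⟩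
  rw [hcardP, Nat.card_congr e1, hker]

end fiber

lemma countQ : ∀ n : ℕ, 0 < n → ∀ d : ℕ, d ∣ n →
    (Nat.card {Q : ZMod d × ZMod n // addOrderOf Q = n} : ℚ) =
      n.totient * psiQ n / psiQ (n / d) := by
  intro n
  induction n using Nat.strong_induction_on with
  | _ n IH =>
  intro hn d hd
  have hdpos : 0 < d := Nat.pos_of_dvd_of_pos hd hn
  rcases eq_or_ne n 1 with rfl | hn1
  · -- base case n = 1
    have hd1 : d = 1 := Nat.dvd_one.mp hd
    subst hd1
    have : ∀ Q : ZMod 1 × ZMod 1, addOrderOf Q = 1 := by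
      intro Q
      have : Q = 0 := Subsingleton.elim Q 0
      rw [this, addOrderOf_zero]
    rw [Nat.card_congr (Equiv.subtypeUnivEquiv this), Nat.card_prod, Nat.card_zmod]
    simp [psiQ_one]
  · -- inductive step
    set p := n.minFac with hpdef
    have hp : p.Prime := Nat.minFac_prime hn1
    set e := n.factorization p with hedef
    have he : 1 ≤ e := hp.factorization_pos_of_dvd hn.ne' (Nat.minFac_dvd n)
    set n' := n / p ^ e with hn'def
    have hsplit : p ^ e * n' = n := Nat.ordProj_mul_ordCompl_eq_self n p
    have hcop : (p ^ e).Coprime n' := (Nat.coprime_ordCompl hp hn.ne').pow_left e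
    have hn'pos : 0 < n' := Nat.ordCompl_pos p hn.ne'
    have hpepos : 0 < p ^ e := pow_pos hp.pos e
    have hpe1 : 1 < p ^ e := Nat.one_lt_pow (by omega) hp.one_lt
    have hn'lt : n' < n := Nat.div_lt_self hn hpe1
    -- split d
    have hd12 : Nat.gcd d (p ^ e) * Nat.gcd d n' = d :=
      (Nat.gcd_mul_gcd_eq_iff_dvd_mul_of_coprime hcop).mpr (by rwa [hsplit])
    set d2 := Nat.gcd d n' with hd2def
    have hd2 : d2 ∣ n' := Nat.gcd_dvd_right d n'
    have hd2pos : 0 < d2 := Nat.gcd_pos_of_pos_left n' hdpos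
    obtain ⟨f, hfle, hd1f⟩ := (Nat.dvd_prime_pow hp).mp (Nat.gcd_dvd_right d (p ^ e))
    have hdeq : d = p ^ f * d2 := by rw [← hd12, ← hd1f]
    have hpfpos : 0 < p ^ f := pow_pos hp.pos f
    have hcopd : (p ^ f).Coprime d2 :=
      Nat.Coprime.coprime_dvd_right hd2 (Nat.Coprime.coprime_dvd_left (pow_dvd_pow p hfle) hcop)
    -- the big AddEquiv
    have Φ : ZMod d × ZMod n ≃+ (ZMod (p ^ f) × ZMod (p ^ e)) × (ZMod d2 × ZMod n') :=
      (AddEquiv.prodCongr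
        (((ZMod.ringEquivCongr hdeq).toAddEquiv).trans
          (ZMod.chineseRemainder hcopd).toAddEquiv)
        (((ZMod.ringEquivCongr hsplit.symm).toAddEquiv).trans
          (ZMod.chineseRemainder hcop).toAddEquiv)).trans
        (AddEquiv.prodProdProdComm _ _ _ _)
    haveI : NeZero (p ^ f) := ⟨hpfpos.ne'⟩
    haveI : NeZero (p ^ e) := ⟨hpepos.ne'⟩
    haveI : NeZero d2 := ⟨hd2pos.ne'⟩
    haveI : NeZero n' := ⟨hn'pos.ne'⟩
    -- condition on the product side
    have hcond : ∀ R : (ZMod (p ^ f) × ZMod (p ^ e)) × (ZMod d2 × ZMod n'),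
        addOrderOf R = n ↔ (addOrderOf R.1 = p ^ e ∧ addOrderOf R.2 = n') := by
      intro R
      have ha : addOrderOf R.1 ∣ p ^ e := by
        apply addOrderOf_dvd_iff_nsmul_eq_zero.mpr
        rw [prod_nsmul_eq_zero_iff]
        exact ⟨nsmul_zmod_eq_zero_of_dvd (pow_dvd_pow p hfle) _,
          nsmul_zmod_eq_zero_of_dvd dvd_rfl _⟩
      have hb : addOrderOf R.2 ∣ n' := by
        apply addOrderOf_dvd_iff_nsmul_eq_zero.mpr
        rw [prod_nsmul_eq_zero_iff]
        exact ⟨nsmul_zmod_eq_zero_of_dvd hd2 _, nsmul_zmod_eq_zero_of_dvd dvd_rfl _⟩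
      constructor
      · intro hR
        rw [Prod.addOrderOf] at hR
        have h1 : n ∣ addOrderOf R.1 * addOrderOf R.2 := by
          rw [← hR]
          exact Nat.lcm_dvd (dvd_mul_right _ _) (dvd_mul_left _ _)
        have h2 : addOrderOf R.1 * addOrderOf R.2 ∣ n := by
          rw [← hsplit]; exact mul_dvd_mul ha hb
        have hab : addOrderOf R.1 * addOrderOf R.2 = n := Nat.dvd_antisymm h2 h1
        have hpea : p ^ e ∣ addOrderOf R.1 := by
          have h3 : p ^ e * n' ∣ addOrderOf R.1 * n' := by
            rw [hsplit, ← hab]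
            exact mul_dvd_mul_left _ hb
          exact (Nat.mul_dvd_mul_iff_right hn'pos).mp h3
        have hA : addOrderOf R.1 = p ^ e := Nat.dvd_antisymm ha hpea
        refine ⟨hA, ?_⟩
        have := hab
        rw [hA, ← hsplit] at this
        exact Nat.eq_of_mul_eq_mul_left hpepos this.symm ▸ rfl
      · rintro ⟨h1, h2⟩
        rw [Prod.addOrderOf, h1, h2, Nat.Coprime.lcm_eq_mul hcop, hsplit]
    -- the cardinality identity
    have hcard : Nat.card {Q : ZMod d × ZMod n // addOrderOf Q = n}
        = Nat.card {x : ZMod (p ^ f) × ZMod (p ^ e) // addOrderOf x = p ^ e}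
          * Nat.card {y : ZMod d2 × ZMod n' // addOrderOf y = n'} := by
      rw [← Nat.card_prod]
      apply Nat.card_congr
      refine (Equiv.subtypeEquiv Φ.toEquiv (fun Q => ?_)).trans
        ((Equiv.subtypeEquiv (Equiv.refl _) (fun R => by simpa using hcond R)).trans
          Equiv.subtypeProdEquivProd)
      rw [show addOrderOf (Φ.toEquiv Q) = addOrderOf Q from
        addOrderOf_injective Φ.toAddMonoidHom Φ.injective Q]
    -- put everything together
    have hIH := IH n' hn'lt hn'pos d2 hd2
    have hPP := countPP p e f hp he hfle
    rw [hcard, Nat.cast_mul, hPP, hIH]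
    -- arithmetic
    have hndiv : n / d = (p ^ e / p ^ f) * (n' / d2) := by
      rw [Nat.div_mul_div_comm (pow_dvd_pow p hfle) hd2, hsplit, ← hdeq]
    have hq1pos : 0 < p ^ e / p ^ f := Nat.div_pos (Nat.pow_le_pow_right hp.pos hfle) hpfpos
    have hq2pos : 0 < n' / d2 := Nat.div_pos (Nat.le_of_dvd hn'pos hd2) hd2pos
    have hcopq : (p ^ e / p ^ f).Coprime (n' / d2) :=
      Nat.Coprime.coprime_dvd_right (Nat.div_dvd_of_dvd hd2)
        (Nat.Coprime.coprime_dvd_left (Nat.div_dvd_of_dvd (pow_dvd_pow p hfle)) hcop)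
    have hpsin : psiQ n = psiQ (p ^ e) * psiQ n' := by
      rw [← hsplit]; exact psiQ_mul hpepos.ne' hn'pos.ne' hcop
    have hpsid : psiQ (n / d) = psiQ (p ^ e / p ^ f) * psiQ (n' / d2) := by
      rw [hndiv]; exact psiQ_mul hq1pos.ne' hq2pos.ne' hcopq
    have htotn : (n.totient : ℚ) = (p ^ e).totient * n'.totient := by
      rw [← hsplit, Nat.totient_mul hcop, Nat.cast_mul]
    rw [hpsid, htotn, hpsin]
    have h1 := psiQ_pos hq1pos
    have h2 := psiQ_pos hq2pos
    field_simp

/-- In `A = (ℤ/dℤ) × (ℤ/nℤ)` with `m ∣ d ∣ n`, the number of pairs `(P, Q)` with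
`P` of order `m`, `Q` of order `n`, and determinant pairing of `P` with `(n/m)Q`
equal to a fixed generator `ζ` of `ℤ/mℤ`, is `m·φ(n)·ψ(n)/ψ(n/d)`. -/
theorem card_pairs_detPairing (m d n : ℕ) (hm : 0 < m) (hmd : m ∣ d) (hdn : d ∣ n)
    (hn : 0 < n) (ζ : ZMod m) (hζ : addOrderOf ζ = m) :
    (Nat.card {PQ : (ZMod d × ZMod n) × (ZMod d × ZMod n) //
        addOrderOf PQ.1 = m ∧ addOrderOf PQ.2 = n ∧
          detPairing d n m PQ.1 ((n / m) • PQ.2) = ζ} : ℚ) =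
      m * Nat.totient n * psiQ n / psiQ (n / d) := by
  classical
  have hd : 0 < d := Nat.pos_of_dvd_of_pos hdn hn
  haveI : NeZero d := ⟨hd.ne'⟩
  haveI : NeZero n := ⟨hn.ne'⟩
  -- reorganize as a sigma type
  have e : {PQ : (ZMod d × ZMod n) × (ZMod d × ZMod n) //
        addOrderOf PQ.1 = m ∧ addOrderOf PQ.2 = n ∧
          detPairing d n m PQ.1 ((n / m) • PQ.2) = ζ}
      ≃ Σ Q : {Q : ZMod d × ZMod n // addOrderOf Q = n},
          {P : ZMod d × ZMod n // addOrderOf P = m ∧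
            detPairing d n m P ((n / m) • Q.1) = ζ} :=
    { toFun := fun s => ⟨⟨s.1.2, s.2.2.1⟩, ⟨s.1.1, s.2.1, s.2.2.2⟩⟩
      invFun := fun t => ⟨(t.2.1, t.1.1), t.2.2.1, t.1.2, t.2.2.2⟩
      left_inv := fun s => rfl
      right_inv := fun t => rfl }
  have hsum : Nat.card {PQ : (ZMod d × ZMod n) × (ZMod d × ZMod n) //
        addOrderOf PQ.1 = m ∧ addOrderOf PQ.2 = n ∧
          detPairing d n m PQ.1 ((n / m) • PQ.2) = ζ}
      = Nat.card {Q : ZMod d × ZMod n // addOrderOf Q = n} * m := by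
    rw [Nat.card_congr e, Nat.card_eq_fintype_card, Fintype.card_sigma]
    have hfib : ∀ Q : {Q : ZMod d × ZMod n // addOrderOf Q = n},
        Fintype.card {P : ZMod d × ZMod n // addOrderOf P = m ∧
          detPairing d n m P ((n / m) • Q.1) = ζ} = m := by
      intro Q
      rw [← Nat.card_eq_fintype_card]
      exact fiber_card hm hmd hdn hn ζ hζ Q.1 Q.2
    rw [Finset.sum_congr rfl (fun Q _ => hfib Q), Finset.sum_const, smul_eq_mul,
      Nat.card_eq_fintype_card]
    rfl
  rw [hsum, Nat.cast_mul, countQ n hn d hdn]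
  ring
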